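/- There is a closed λ-term lookup_λ of Λ_det and a constant c such that for every value k, every natural number n, and every nonempty string i over a finite alphabet with n < |i|, lookup_λ k ⟨n̂⟩ ⟨i⟩ →det^m k ⟨a⟩, where a is the (n+1)-th character of i and m ≤ c·(n+1)·(log₂(n+1)+1), i.e. the lookup of the (n+1)-th character via a binary counter takes O(n log n) →det-steps. -/

import Mathlib

namespace LogTM

/-- Untyped λ-terms with de Bruijn indices. -/
inductive Lam : Type
  | var : ℕ → Lam
  | lam : Lam → Lam
  | app : Lam → Lam → Lam

namespace Lam

/-- Values: variables and abstractions. -/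
def IsValue : Lam → Prop
  | var _ => True
  | lam _ => True
  | app _ _ => False

/-- Terms of the deterministic λ-calculus `Λ_det`:
    the argument of every application is a value. -/
def InDet : Lam → Prop
  | var _ => True
  | lam t => InDet t
  | app t u => InDet t ∧ InDet u ∧ IsValue u

/-- Shift the free variables `≥ d` by one. -/
def lift : ℕ → Lam → Lam
  | d, var n => if n < d then var n else var (n + 1)
  | d, lam t => lam (lift (d + 1) t)
  | d, app t u => app (lift d t) (lift d u)

/-- Capture-avoiding substitution `t[k := u]`. -/
def subst : Lam → ℕ → Lam → Lam
  | var n, k, u => if n < k then var n else if n = k then u else var (n - 1)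
  | lam t, k, u => lam (subst t (k + 1) (lift 0 u))
  | app t s, k, u => app (subst t k u) (subst s k u)

/-- Weak evaluation `→det` of the deterministic λ-calculus: β at the root,
    closed under evaluation contexts `E ::= ⟨·⟩ | E v`. -/
inductive Step : Lam → Lam → Prop
  | beta {t v : Lam} : IsValue v → Step (app (lam t) v) (subst t 0 v)
  | appL {t t' v : Lam} : IsValue v → Step t t' → Step (app t v) (app t' v)

/-- `n`-fold iteration of `→det`. -/
inductive StepN : ℕ → Lam → Lam → Prop
  | refl (t : Lam) : StepN 0 t t
  | head {n : ℕ} {t u r : Lam} : Step t u → StepN n u r → StepN (n + 1) t r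

/-- All free variables are `< d`. -/
def ClosedUnder : ℕ → Lam → Prop
  | d, var n => n < d
  | d, lam t => ClosedUnder (d + 1) t
  | d, app t u => ClosedUnder d t ∧ ClosedUnder d u

/-- Closed terms. -/
def Closed (t : Lam) : Prop := ClosedUnder 0 t

end Lam

/-- `n` nested abstractions. -/
def iterLam : ℕ → Lam → Lam
  | 0, t => t
  | n + 1, t => .lam (iterLam n t)

/-- Left-nested applications. -/
def mkApps : Lam → List Lam → Lam
  | t, [] => t
  | t, u :: us => mkApps (.app t u) us

/-- Scott encoding of the character `a` of a `k`-letter (ordered) alphabet: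
    `⟨a_i⟩ = λx_1…λx_k.x_i`. -/
def encChar (k : ℕ) (a : Fin k) : Lam := iterLam k (.var (k - 1 - (a : ℕ)))

/-- Scott encoding of strings over a `k`-letter (ordered) alphabet:
    `⟨ε⟩ = λx_1…λx_k.λx_ε.x_ε` and `⟨a_i·r⟩ = λx_1…λx_k.λx_ε.x_i ⟨r⟩`. -/
def encStr (k : ℕ) : List (Fin k) → Lam
  | [] => iterLam (k + 1) (.var 0)
  | a :: r => iterLam (k + 1) (.app (.var (k - (a : ℕ))) (encStr k r))

/-- Scott encoding of binary strings (alphabet `{0,1}`, `false = 0 < 1 = true`). -/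
def encBits : List Bool → Lam
  | [] => .lam (.lam (.lam (.var 0)))
  | false :: s => .lam (.lam (.lam (.app (.var 2) (encBits s))))
  | true :: s => .lam (.lam (.lam (.app (.var 1) (encBits s))))

/-- Successor on reversed binary strings. -/
def rsucc : List Bool → List Bool
  | [] => [true]
  | false :: s => true :: s
  | true :: s => false :: rsucc s

/-- Predecessor on (nonempty) reversed binary strings. -/
def rpred : List Bool → List Bool
  | [] => []
  | false :: s => true :: rpred s
  | [true] => []
  | true :: b :: s => false :: b :: s

/-- Lookup of the `(n+1)`-th character of a string using a reversed-binary counter. -/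
def rlookup {α : Type*} : List Bool → List α → Option α
  | _, [] => none
  | [], c :: _ => some c
  | b :: nb, _ :: s => rlookup (rpred (b :: nb)) s

/-- Input alphabet `B_I = {0, 1, L, R}`. -/
inductive BI : Type
  | b0 | b1 | bL | bR

/-- Work alphabet `B_W = {0, 1, □}`. -/
inductive BW : Type
  | w0 | w1 | wB

/-- Input head moves `{-1, +1, 0}`. -/
inductive IDir : Type
  | minus | plus | zero

/-- Work head moves `{←, →, ↓}`. -/
inductive WDir : Type
  | left | right | stay

/-- A deterministic binary Turing machine with input: states `Fin Q`, initial state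
    `qin`, final states `qT` and `qF`, and a partial transition function `δ` that is
    undefined on the final states. -/
structure TM where
  Q : ℕ
  qin : Fin Q
  qT : Fin Q
  qF : Fin Q
  δ : BI → BW → Fin Q → Option (IDir × BW × WDir × Fin Q)
  δ_final : ∀ b a s, (s = qT ∨ s = qF) → δ b a s = none

/-- A configuration `(i, n | w_l, a, w_r | s)`: read-only input `i`, input-head
    position `n`, work tape `w_l, a, w_r` (head on `a`), current state `s`. -/
structure Config (M : TM) where
  input : List BI
  pos : ℕ
  left : List BW
  head : BW
  right : List BW
  state : Fin M.Q

/-- Final configurations: the state is `qT` or `qF`. -/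
def Config.Final {M : TM} (C : Config M) : Prop := C.state = M.qT ∨ C.state = M.qF

/-- One machine transition, as a partial function (the relation `C →M D` is
    `M.step C = some D`). -/
def TM.step (M : TM) (C : Config M) : Option (Config M) :=
  match C.input[C.pos]? with
  | none => none
  | some b =>
    match M.δ b C.head C.state with
    | none => none
    | some (d, a', mv, s') =>
      let pos' : ℕ :=
        match d with
        | .minus => C.pos - 1
        | .plus => C.pos + 1
        | .zero => C.pos
      let w : List BW × BW × List BW :=
        match mv with
        | .stay => (C.left, a', C.right)
        | .left =>
          match C.left.getLast? with
          | none => ([], BW.wB, a' :: C.right)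
          | some a'' => (C.left.dropLast, a'', a' :: C.right)
        | .right =>
          match C.right with
          | [] => (C.left ++ [a'], BW.wB, [])
          | a'' :: r => (C.left ++ [a'], a'', r)
      some ⟨C.input, pos', w.1, w.2.1, w.2.2, s'⟩

/-- `n` machine transitions. -/
def TM.multiStep (M : TM) : ℕ → Config M → Option (Config M)
  | 0, C => some C
  | n + 1, C => (M.step C).bind (M.multiStep n)

/-- The fixed ordering `0 < 1 < L < R` of `B_I`. -/
def BI.toFin : BI → Fin 4
  | b0 => 0
  | b1 => 1
  | bL => 2
  | bR => 3

/-- The fixed ordering `0 < 1 < □` of `B_W`. -/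
def BW.toFin : BW → Fin 3
  | w0 => 0
  | w1 => 1
  | wB => 2

/-- Encoding of configurations:
    `⟨C⟩ = λx.(x ⟨i⟩ ⟨n̂⟩ ⟨w_l^R⟩ ⟨a⟩ ⟨w_r⟩ ⟨s⟩)`. -/
def encConfig {M : TM} (C : Config M) : Lam :=
  .lam (mkApps (.var 0)
    [encStr 4 (C.input.map BI.toFin),
     encBits (Nat.bits C.pos),
     encStr 3 (C.left.reverse.map BW.toFin),
     encChar 3 C.head.toFin,
     encStr 3 (C.right.map BW.toFin),
     encChar M.Q C.state])

/-- A bit as an input character. -/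
def bitToBI (b : Bool) : BI := if b then .b1 else .b0

/-- The initial configuration on binary input `i`: input tape `L·i·R`,
    input head at position `0`, empty work tape, initial state. -/
def initConfig (M : TM) (i : List Bool) : Config M :=
  ⟨BI.bL :: (i.map bitToBI) ++ [BI.bR], 0, [], BW.wB, [], M.qin⟩

/-- Scott-encoded booleans: `⟨true⟩ = λx.λy.x`, `⟨false⟩ = λx.λy.y`. -/
def encBool : Bool → Lam
  | true => .lam (.lam (.var 1))
  | false => .lam (.lam (.var 0))


----------------------------------------------------------------
-- machinery
----------------------------------------------------------------
open Lam

theorem closedUnder_mono : ∀ {t : Lam} {d e : ℕ}, d ≤ e → ClosedUnder d t → ClosedUnder e t := by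
  intro t
  induction t with
  | var n => intro d e h hc; simp [ClosedUnder] at *; omega
  | lam t ih => intro d e h hc; exact ih (Nat.succ_le_succ h) hc
  | app t u iht ihu => intro d e h hc; exact ⟨iht h hc.1, ihu h hc.2⟩

theorem Lam.Closed.under {t : Lam} (h : t.Closed) (d : ℕ) : ClosedUnder d t :=
  closedUnder_mono (Nat.zero_le d) h

/-- Add `m` to every variable `≥ c`. -/
def shiftA (c m : ℕ) : Lam → Lam
  | .var n => if n < c then .var n else .var (n + m)
  | .lam t => .lam (shiftA (c + 1) m t)
  | .app t u => .app (shiftA c m t) (shiftA c m u)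

theorem shiftA_zero : ∀ (t : Lam) (c : ℕ), shiftA c 0 t = t
  | .var n, c => by simp [shiftA]
  | .lam t, c => by simp [shiftA, shiftA_zero t]
  | .app t u, c => by simp [shiftA, shiftA_zero t, shiftA_zero u]

theorem lift_eq_shiftA : ∀ (t : Lam) (c : ℕ), lift c t = shiftA c 1 t
  | .var n, c => by simp [shiftA, lift]
  | .lam t, c => by simp [shiftA, lift, lift_eq_shiftA t]
  | .app t u, c => by simp [shiftA, lift, lift_eq_shiftA t, lift_eq_shiftA u]

theorem shiftA_shiftA : ∀ (t : Lam) (c m j : ℕ),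
    shiftA c m (shiftA c j t) = shiftA c (j + m) t
  | .var n, c, m, j => by
    by_cases h : n < c <;> simp [shiftA, h]
    rw [if_neg (by omega)]; ring_nf
  | .lam t, c, m, j => by simp [shiftA, shiftA_shiftA t]
  | .app t u, c, m, j => by simp [shiftA, shiftA_shiftA t, shiftA_shiftA u]

theorem shiftA_closedUnder : ∀ {t : Lam} {c : ℕ}, ClosedUnder c t → ∀ m, shiftA c m t = t
  | .var n, c, h, m => by simp [shiftA, ClosedUnder] at h ⊢; simp [h]
  | .lam t, c, h, m => by
    simp [shiftA, ClosedUnder] at h ⊢; exact shiftA_closedUnder h m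
  | .app t u, c, h, m => by
    simp [shiftA, ClosedUnder] at h ⊢
    exact ⟨shiftA_closedUnder h.1 m, shiftA_closedUnder h.2 m⟩

theorem shiftA_closed {t : Lam} (h : t.Closed) : ∀ (c m : ℕ), shiftA c m t = t :=
  fun c m => shiftA_closedUnder (h.under c) m

/-- Parallel substitution of a list of terms for the variables `d, d+1, …`;
    the `i`-th entry (counting from the innermost binder) gets shifted by `d`. -/
def msub (σ : List Lam) : ℕ → Lam → Lam
  | d, .var n => if n < d then .var n
      else shiftA 0 d (σ.getD (n - d) (.var (n - d - σ.length)))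
  | d, .lam t => .lam (msub σ (d + 1) t)
  | d, .app t u => .app (msub σ d t) (msub σ d u)

theorem msub_nil : ∀ (t : Lam) (d : ℕ), msub [] d t = t
  | .var n, d => by
    by_cases h : n < d
    · simp [msub, h]
    · simp only [msub, if_neg h, List.getD, List.getElem?_nil, Option.getD_none, shiftA]
      rw [if_neg (by omega)]
      simp only [List.length_nil, Nat.sub_zero]
      congr 1
      omega
  | .lam t, d => by simp [msub, msub_nil t]
  | .app t u, d => by simp [msub, msub_nil t, msub_nil u]

theorem msub_closedUnder : ∀ {t : Lam} {d : ℕ}, ClosedUnder d t → ∀ σ, msub σ d t = t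
  | .var n, d, h, σ => by simp [ClosedUnder] at h; simp [msub, h]
  | .lam t, d, h, σ => by
    simp [ClosedUnder] at h; simp [msub, msub_closedUnder h σ]
  | .app t u, d, h, σ => by
    simp [ClosedUnder] at h
    simp [msub, msub_closedUnder h.1 σ, msub_closedUnder h.2 σ]

theorem msub_closed {t : Lam} (h : t.Closed) : ∀ (σ : List Lam) (d : ℕ), msub σ d t = t :=
  fun σ d => msub_closedUnder (h.under d) σ

theorem msub_shiftA_aux (σ : List Lam) (d : ℕ) :
    ∀ (v : Lam) (c : ℕ), msub σ (d + c) (shiftA c (d + σ.length) v) = shiftA c d v := by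
  intro v
  induction v with
  | var n =>
    intro c
    by_cases h : n < c
    · simp [shiftA, msub, h, if_pos (by omega : n < d + c)]
    · simp only [shiftA, if_neg h]
      rw [msub, if_neg (by omega)]
      rw [List.getD_eq_default _ _ (by omega)]
      simp [shiftA]
      omega
  | lam t ih =>
    intro c
    simp only [shiftA, msub]
    rw [show d + c + 1 = d + (c + 1) by omega, ih (c + 1)]
  | app t u iht ihu => intro c; simp [shiftA, msub, iht c, ihu c]

theorem msub_shiftA {σ : List Lam} {d m : ℕ} (v : Lam) (h : m = d + σ.length) :
    msub σ d (shiftA 0 m v) = shiftA 0 d v := by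
  subst h
  simpa using msub_shiftA_aux σ d v 0


theorem lift_shiftA (v : Lam) : ∀ (c m : ℕ), lift c (shiftA c m v) = shiftA c (m + 1) v := by
  intro c m
  rw [lift_eq_shiftA, shiftA_shiftA]

theorem msub_subst {v : Lam} (σ : List Lam) :
    ∀ (b : Lam) (d : ℕ),
      msub σ d (subst b (d + σ.length) (shiftA 0 (d + σ.length) v)) = msub (σ ++ [v]) d b := by
  intro b
  induction b with
  | var n =>
    intro d
    rcases Nat.lt_trichotomy n (d + σ.length) with h | h | h
    · rw [subst, if_pos h]
      by_cases h2 : n < d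
      · simp [msub, h2]
      · rw [msub, if_neg h2, msub, if_neg h2]
        congr 1
        rw [List.getD_eq_getElem _ _ (by omega), List.getD_eq_getElem _ _ (by simp; omega),
          List.getElem_append_left (by omega)]
    · subst h
      rw [subst, if_neg (by omega), if_pos rfl]
      rw [msub_shiftA v rfl, msub, if_neg (by omega)]
      congr 1
      rw [show d + σ.length - d = σ.length by omega,
        List.getD_eq_getElem _ _ (by simp), List.getElem_concat_length]
      rfl
    · rw [subst, if_neg (by omega), if_neg (by omega)]
      rw [msub, if_neg (by omega), msub, if_neg (by omega)]
      rw [List.getD_eq_default _ _ (by omega), List.getD_eq_default _ _ (by simp; omega)]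
      simp [shiftA]
      omega
  | lam t ih =>
    intro d
    rw [subst, lift_shiftA, msub, msub,
      show d + σ.length + 1 = (d + 1) + σ.length by omega]
    exact congrArg Lam.lam (ih (d + 1))
  | app t u iht ihu => intro d; rw [subst, msub, msub, iht d, ihu d]

theorem subst_iterLam :
    ∀ (n : ℕ) (b : Lam) (k : ℕ) (v : Lam),
      subst (iterLam n b) k v = iterLam n (subst b (k + n) (shiftA 0 n v)) := by
  intro n
  induction n with
  | zero => intro b k v; simp [iterLam, shiftA_zero]
  | succ n ih =>
    intro b k v
    rw [iterLam, subst, lift_eq_shiftA, ih, iterLam]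
    rw [shiftA_shiftA, show k + 1 + n = k + (n+1) by omega, show (1 + n : ℕ) = n + 1 by omega]

theorem stepN_trans {m k : ℕ} {t u r : Lam} (h1 : StepN m t u) (h2 : StepN k u r) :
    StepN (m + k) t r := by
  induction h1 with
  | refl => simpa using h2
  | head s _ ih =>
    rw [Nat.add_right_comm]
    exact StepN.head s (ih h2)

theorem StepN.one {t u : Lam} (h : Step t u) : StepN 1 t u := .head h (.refl u)

theorem step_mkApps {t t' : Lam} (h : Step t t') :
    ∀ (vs : List Lam), (∀ v ∈ vs, v.IsValue) → Step (mkApps t vs) (mkApps t' vs) := by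
  intro vs
  induction vs generalizing t t' with
  | nil => intro _; exact h
  | cons v vs ih =>
    intro hv
    exact ih (Step.appL (hv v (by simp)) h) (fun w hw => hv w (by simp [hw]))

theorem stepN_mkApps {m : ℕ} {t t' : Lam} (h : StepN m t t')
    (vs : List Lam) (hv : ∀ v ∈ vs, v.IsValue) : StepN m (mkApps t vs) (mkApps t' vs) := by
  induction h with
  | refl => exact .refl _
  | head s _ ih => exact .head (step_mkApps s vs hv) ih

theorem stepN_apps : ∀ (vs : List Lam) (b : Lam), (∀ v ∈ vs, v.IsValue) →
    StepN vs.length (mkApps (iterLam vs.length b) vs) (msub vs.reverse 0 b) := by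
  intro vs
  induction vs with
  | nil => intro b _; simpa [mkApps, iterLam, msub_nil] using StepN.refl b
  | cons v vs ih =>
    intro b hv
    have hst : Step (.app (.lam (iterLam vs.length b)) v)
        (subst (iterLam vs.length b) 0 v) := Step.beta (hv v (by simp))
    rw [subst_iterLam] at hst
    have h1 : StepN 1 (mkApps (.app (.lam (iterLam vs.length b)) v) vs)
        (mkApps (iterLam vs.length (subst b (0 + vs.length) (shiftA 0 vs.length v))) vs) :=
      stepN_mkApps (StepN.one hst) vs (fun w hw => hv w (by simp [hw]))
    have h2 := ih (subst b (0 + vs.length) (shiftA 0 vs.length v))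
      (fun w hw => hv w (by simp [hw]))
    have h3 := stepN_trans h1 h2
    have e : msub vs.reverse 0 (subst b (0 + vs.length) (shiftA 0 vs.length v))
        = msub (vs.reverse ++ [v]) 0 b := by
      have := msub_subst (v := v) vs.reverse b 0
      simpa using this
    rw [e, Nat.add_comm] at h3
    simpa [iterLam, mkApps, List.reverse_cons] using h3

theorem mkApps_append (t : Lam) (us vs : List Lam) :
    mkApps t (us ++ vs) = mkApps (mkApps t us) vs := by
  induction us generalizing t with
  | nil => rfl
  | cons u us ih => simp [mkApps, ih]

theorem closedUnder_iterLam {b : Lam} : ∀ (n d : ℕ), ClosedUnder (d + n) b →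
    ClosedUnder d (iterLam n b) := by
  intro n
  induction n with
  | zero => intro d h; exact h
  | succ n ih =>
    intro d h
    exact ih (d + 1) (by rwa [show d + 1 + n = d + (n + 1) by omega])

theorem closedUnder_mkApps {d : ℕ} {t : Lam} :
    ∀ {vs : List Lam}, ClosedUnder d t → (∀ v ∈ vs, ClosedUnder d v) →
      ClosedUnder d (mkApps t vs) := by
  intro vs
  induction vs generalizing t with
  | nil => intro h _; exact h
  | cons v vs ih =>
    intro h hv
    exact ih ⟨h, hv v (by simp)⟩ (fun w hw => hv w (by simp [hw]))

theorem indet_mkApps {t : Lam} :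
    ∀ {vs : List Lam}, InDet t → (∀ v ∈ vs, InDet v ∧ IsValue v) → InDet (mkApps t vs) := by
  intro vs
  induction vs generalizing t with
  | nil => intro h _; exact h
  | cons v vs ih =>
    intro h hv
    exact ih ⟨h, (hv v (by simp)).1, (hv v (by simp)).2⟩ (fun w hw => hv w (by simp [hw]))

theorem indet_iterLam {b : Lam} : ∀ (n : ℕ), InDet b → InDet (iterLam n b) := by
  intro n h
  induction n with
  | zero => exact h
  | succ n ih => exact ih


----------------------------------------------------------------
-- encodings: closedness and values
----------------------------------------------------------------

theorem closed_encBits : ∀ s, (encBits s).Closed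
  | [] => by simp [encBits, Closed, ClosedUnder]
  | false :: s => by
    simp only [encBits, Closed, ClosedUnder]
    exact ⟨by omega, (closed_encBits s).under 3⟩
  | true :: s => by
    simp only [encBits, Closed, ClosedUnder]
    exact ⟨by omega, (closed_encBits s).under 3⟩

theorem closed_encStr (K : ℕ) : ∀ r, (encStr K r).Closed
  | [] => closedUnder_iterLam (K + 1) 0 (by simp [ClosedUnder])
  | a :: r => by
    refine closedUnder_iterLam (K + 1) 0 ⟨?_, (closed_encStr K r).under _⟩
    simp [ClosedUnder]

theorem closed_encChar {K : ℕ} (a : Fin K) : (encChar K a).Closed := by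
  refine closedUnder_iterLam K 0 ?_
  have := a.isLt
  simp [ClosedUnder]; omega

theorem isValue_encBits (s : List Bool) : (encBits s).IsValue := by
  cases s with
  | nil => trivial
  | cons b s => cases b <;> trivial

theorem isValue_encStr (K : ℕ) (r : List (Fin K)) : (encStr K r).IsValue := by
  cases r <;> trivial

----------------------------------------------------------------
-- the predecessor term
----------------------------------------------------------------

def idTm : Lam := .lam (.var 0)
def oneC : Lam := .lam (.lam (.lam (.app (.var 1) (.var 3))))
def zzC : Lam := .lam (.lam (.lam (.app (.var 2) (.lam (.lam (.lam (.app (.var 2) (.var 7))))))))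
def zoC : Lam := .lam (.lam (.lam (.app (.var 2) (.lam (.lam (.lam (.app (.var 1) (.var 7))))))))
def predB0 : Lam := .lam (mkApps (.var 3) [.var 3, .var 0, .lam (.app (.var 2) oneC)])
def predB1 : Lam := .lam (mkApps (.var 0)
  [.lam (.lam (.app (.var 3) zzC)), .lam (.lam (.app (.var 3) zoC)),
   .lam (.app (.var 2) (encBits [])), idTm])
def predBody : Lam := mkApps (.var 1) [predB0, predB1, idTm]
def PRED : Lam := iterLam 3 predBody

def kapP (k : Lam) : Lam := .lam (.app (shiftA 0 1 k) oneC)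
def predB0i (p k : Lam) : Lam := .lam (mkApps p [p, .var 0, .lam (.app (shiftA 0 2 k) oneC)])
def predC0i (k : Lam) : Lam := .lam (.lam (.app (shiftA 0 2 k) zzC))
def predC1i (k : Lam) : Lam := .lam (.lam (.app (shiftA 0 2 k) zoC))
def predCEi (k : Lam) : Lam := .lam (.app (shiftA 0 1 k) (encBits []))
def predB1i (k : Lam) : Lam := .lam (mkApps (.var 0)
  [.lam (.lam (.app (shiftA 0 3 k) zzC)), .lam (.lam (.app (shiftA 0 3 k) zoC)),
   .lam (.app (shiftA 0 2 k) (encBits [])), idTm])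

theorem closed_PRED : PRED.Closed := by
  simp [PRED, predBody, predB0, predB1, iterLam, mkApps, idTm, oneC, zzC, zoC, encBits,
    Closed, ClosedUnder]

theorem isValue_PRED : PRED.IsValue := trivial

----------------------------------------------------------------
-- dispatch lemmas for encBits
----------------------------------------------------------------

theorem encBits_dispatch_false {s : List Bool} {X Y Z : Lam}
    (hX : X.IsValue) (hY : Y.IsValue) (hZ : Z.IsValue) :
    StepN 3 (mkApps (encBits (false :: s)) [X, Y, Z]) (.app X (encBits s)) := by
  have h : StepN 3 (mkApps (encBits (false :: s)) [X, Y, Z])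
      (msub [Z, Y, X] 0 (.app (.var 2) (encBits s))) := by
    have := stepN_apps [X, Y, Z] (.app (.var 2) (encBits s)) ?_
    · exact this
    · intro v hv
      simp only [List.mem_cons, List.not_mem_nil, or_false] at hv
      rcases hv with rfl | rfl | rfl
      exacts [hX, hY, hZ]
  rwa [show msub [Z, Y, X] 0 (.app (.var 2) (encBits s)) = .app X (encBits s) from by
    simp [msub, shiftA_zero, msub_closed (closed_encBits s)]] at h

theorem encBits_dispatch_true {s : List Bool} {X Y Z : Lam}
    (hX : X.IsValue) (hY : Y.IsValue) (hZ : Z.IsValue) :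
    StepN 3 (mkApps (encBits (true :: s)) [X, Y, Z]) (.app Y (encBits s)) := by
  have h : StepN 3 (mkApps (encBits (true :: s)) [X, Y, Z])
      (msub [Z, Y, X] 0 (.app (.var 1) (encBits s))) := by
    have := stepN_apps [X, Y, Z] (.app (.var 1) (encBits s)) ?_
    · exact this
    · intro v hv
      simp only [List.mem_cons, List.not_mem_nil, or_false] at hv
      rcases hv with rfl | rfl | rfl
      exacts [hX, hY, hZ]
  rwa [show msub [Z, Y, X] 0 (.app (.var 1) (encBits s)) = .app Y (encBits s) from by
    simp [msub, shiftA_zero, msub_closed (closed_encBits s)]] at h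

theorem encBits_dispatch_nil {X Y Z : Lam}
    (hX : X.IsValue) (hY : Y.IsValue) (hZ : Z.IsValue) :
    StepN 3 (mkApps (encBits []) [X, Y, Z]) Z := by
  have h : StepN 3 (mkApps (encBits []) [X, Y, Z])
      (msub [Z, Y, X] 0 (.var 0)) := by
    have := stepN_apps [X, Y, Z] (.var 0) ?_
    · exact this
    · intro v hv
      simp only [List.mem_cons, List.not_mem_nil, or_false] at hv
      rcases hv with rfl | rfl | rfl
      exacts [hX, hY, hZ]
  rwa [show msub [Z, Y, X] 0 (.var 0) = Z from by simp [msub, shiftA_zero]] at h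

----------------------------------------------------------------
-- step lemmas for PRED
----------------------------------------------------------------

theorem pred_entry {p nb k : Lam} (hpc : p.Closed) (hnbc : nb.Closed)
    (hp : p.IsValue) (hnb : nb.IsValue) (hk : k.IsValue) :
    StepN 3 (mkApps PRED [p, nb, k]) (mkApps nb [predB0i p k, predB1i k, idTm]) := by
  have h : StepN 3 (mkApps PRED [p, nb, k]) (msub [k, nb, p] 0 predBody) := by
    have := stepN_apps [p, nb, k] predBody ?_
    · exact this
    · intro v hv
      simp only [List.mem_cons, List.not_mem_nil, or_false] at hv
      rcases hv with rfl | rfl | rfl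
      exacts [hp, hnb, hk]
  rwa [show msub [k, nb, p] 0 predBody = mkApps nb [predB0i p k, predB1i k, idTm] from by
    simp [predBody, predB0, predB1, predB0i, predB1i, msub, mkApps, idTm, oneC, zzC, zoC,
      encBits, shiftA_zero, shiftA_closed hpc, shiftA_closed hnbc]] at h

theorem predB0i_entry {p k tv : Lam} (hpc : p.Closed) (htv : tv.IsValue) :
    StepN 1 (.app (predB0i p k) tv) (mkApps p [p, tv, kapP k]) := by
  have h : StepN 1 (.app (predB0i p k) tv)
      (msub [tv] 0 (mkApps p [p, .var 0, .lam (.app (shiftA 0 2 k) oneC)])) := by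
    have := stepN_apps [tv] (mkApps p [p, .var 0, .lam (.app (shiftA 0 2 k) oneC)]) ?_
    · exact this
    · intro v hv; simp only [List.mem_cons, List.not_mem_nil, or_false] at hv
      subst hv; exact htv
  have e2 : msub [tv] 1 (shiftA 0 2 k) = shiftA 0 1 k := msub_shiftA k (by simp)
  rwa [show msub [tv] 0 (mkApps p [p, .var 0, .lam (.app (shiftA 0 2 k) oneC)])
      = mkApps p [p, tv, kapP k] from by
    simp [msub, mkApps, oneC, kapP, e2, shiftA_zero, msub_closed hpc]] at h

theorem kapP_entry {k : Lam} (s : List Bool) :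
    StepN 1 (.app (kapP k) (encBits s)) (.app k (encBits (true :: s))) := by
  have h : StepN 1 (.app (kapP k) (encBits s))
      (msub [encBits s] 0 (.app (shiftA 0 1 k) oneC)) := by
    have := stepN_apps [encBits s] (.app (shiftA 0 1 k) oneC) ?_
    · exact this
    · intro v hv; simp only [List.mem_cons, List.not_mem_nil, or_false] at hv
      subst hv; exact isValue_encBits s
  have e2 : msub [encBits s] 0 (shiftA 0 1 k) = shiftA 0 0 k := msub_shiftA k (by simp)
  rwa [show msub [encBits s] 0 (.app (shiftA 0 1 k) oneC) = .app k (encBits (true :: s)) from by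
    simp [msub, oneC, e2, shiftA_zero, shiftA_closed (closed_encBits s), encBits]] at h

theorem predB1i_entry {k tv : Lam} (htv : tv.IsValue) :
    StepN 1 (.app (predB1i k) tv)
      (mkApps tv [predC0i k, predC1i k, predCEi k, idTm]) := by
  have h : StepN 1 (.app (predB1i k) tv)
      (msub [tv] 0 (mkApps (.var 0)
        [.lam (.lam (.app (shiftA 0 3 k) zzC)), .lam (.lam (.app (shiftA 0 3 k) zoC)),
         .lam (.app (shiftA 0 2 k) (encBits [])), idTm])) := by
    have := stepN_apps [tv] (mkApps (.var 0)
        [.lam (.lam (.app (shiftA 0 3 k) zzC)), .lam (.lam (.app (shiftA 0 3 k) zoC)),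
         .lam (.app (shiftA 0 2 k) (encBits [])), idTm]) ?_
    · exact this
    · intro v hv; simp only [List.mem_cons, List.not_mem_nil, or_false] at hv
      subst hv; exact htv
  have e2 : msub [tv] 2 (shiftA 0 3 k) = shiftA 0 2 k := msub_shiftA k (by simp)
  have e3 : msub [tv] 1 (shiftA 0 2 k) = shiftA 0 1 k := msub_shiftA k (by simp)
  rwa [show msub [tv] 0 (mkApps (.var 0)
        [.lam (.lam (.app (shiftA 0 3 k) zzC)), .lam (.lam (.app (shiftA 0 3 k) zoC)),
         .lam (.app (shiftA 0 2 k) (encBits [])), idTm])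
      = mkApps tv [predC0i k, predC1i k, predCEi k, idTm] from by
    simp [msub, mkApps, zzC, zoC, idTm, encBits, predC0i, predC1i, predCEi, e2, e3,
      shiftA_zero]] at h

theorem predC0i_entry {k : Lam} (s : List Bool) :
    StepN 2 (mkApps (predC0i k) [encBits s, idTm])
      (.app k (encBits (false :: false :: s))) := by
  have h : StepN 2 (mkApps (predC0i k) [encBits s, idTm])
      (msub [idTm, encBits s] 0 (.app (shiftA 0 2 k) zzC)) := by
    have := stepN_apps [encBits s, idTm] (.app (shiftA 0 2 k) zzC) ?_
    · exact this
    · intro v hv; simp only [List.mem_cons, List.not_mem_nil, or_false] at hv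
      rcases hv with rfl | rfl
      exacts [isValue_encBits s, trivial]
  have e2 : msub [idTm, encBits s] 0 (shiftA 0 2 k) = shiftA 0 0 k := msub_shiftA k (by simp)
  rwa [show msub [idTm, encBits s] 0 (.app (shiftA 0 2 k) zzC)
      = .app k (encBits (false :: false :: s)) from by
    simp [msub, zzC, e2, shiftA_zero, shiftA_closed (closed_encBits s), encBits]] at h

theorem predC1i_entry {k : Lam} (s : List Bool) :
    StepN 2 (mkApps (predC1i k) [encBits s, idTm])
      (.app k (encBits (false :: true :: s))) := by
  have h : StepN 2 (mkApps (predC1i k) [encBits s, idTm])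
      (msub [idTm, encBits s] 0 (.app (shiftA 0 2 k) zoC)) := by
    have := stepN_apps [encBits s, idTm] (.app (shiftA 0 2 k) zoC) ?_
    · exact this
    · intro v hv; simp only [List.mem_cons, List.not_mem_nil, or_false] at hv
      rcases hv with rfl | rfl
      exacts [isValue_encBits s, trivial]
  have e2 : msub [idTm, encBits s] 0 (shiftA 0 2 k) = shiftA 0 0 k := msub_shiftA k (by simp)
  rwa [show msub [idTm, encBits s] 0 (.app (shiftA 0 2 k) zoC)
      = .app k (encBits (false :: true :: s)) from by
    simp [msub, zoC, e2, shiftA_zero, shiftA_closed (closed_encBits s), encBits]] at h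

theorem predCEi_entry {k : Lam} :
    StepN 1 (.app (predCEi k) idTm) (.app k (encBits [])) := by
  have h : StepN 1 (.app (predCEi k) idTm)
      (msub [idTm] 0 (.app (shiftA 0 1 k) (encBits []))) := by
    have := stepN_apps [idTm] (.app (shiftA 0 1 k) (encBits [])) ?_
    · exact this
    · intro v hv; simp only [List.mem_cons, List.not_mem_nil, or_false] at hv
      subst hv; trivial
  have e2 : msub [idTm] 0 (shiftA 0 1 k) = shiftA 0 0 k := msub_shiftA k (by simp)
  rwa [show msub [idTm] 0 (.app (shiftA 0 1 k) (encBits [])) = .app k (encBits []) from by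
    simp [msub, e2, shiftA_zero, encBits]] at h


theorem isValue_kapP (k : Lam) : (kapP k).IsValue := trivial

theorem pred_steps : ∀ (n : ℕ), 0 < n → ∀ (k : Lam), k.IsValue →
    ∃ m, m ≤ 12 * (Nat.log 2 n + 1) ∧
      StepN m (mkApps PRED [PRED, encBits n.bits, k]) (.app k (encBits (n - 1).bits)) := by
  intro n
  induction n using Nat.strong_induction_on with
  | _ n ih =>
  intro hn k hk
  rcases Nat.even_or_odd n with he | ho
  · -- even case: recursive call
    obtain ⟨q, hq⟩ := he
    have hq1 : 0 < q := by omega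
    have hb : n.bits = false :: q.bits := by
      rw [show n = 2 * q by omega]; exact Nat.bit0_bits q (by omega)
    have hb' : (n - 1).bits = true :: (q - 1).bits := by
      rw [show n - 1 = 2 * (q - 1) + 1 by omega]; exact Nat.bit1_bits _
    obtain ⟨m1, hm1, hs1⟩ := ih q (by omega) hq1 (kapP k) (isValue_kapP k)
    rw [hb, hb']
    have h1 := pred_entry (p := PRED) (nb := encBits (false :: q.bits)) (k := k)
      closed_PRED (closed_encBits _) isValue_PRED (isValue_encBits _) hk
    have h2 := encBits_dispatch_false (s := q.bits)
      (X := predB0i PRED k) (Y := predB1i k) (Z := idTm) trivial trivial trivial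
    have h3 := predB0i_entry (p := PRED) (k := k) (tv := encBits q.bits)
      closed_PRED (isValue_encBits _)
    have h5 := kapP_entry (k := k) (q - 1).bits
    refine ⟨3 + (3 + (1 + (m1 + 1))), ?_,
      stepN_trans h1 (stepN_trans h2 (stepN_trans h3 (stepN_trans hs1 h5)))⟩
    have hlog : Nat.log 2 n = Nat.log 2 q + 1 := by
      rw [show n = q * 2 by omega]; exact Nat.log_mul_base (by norm_num) (by omega)
    omega
  · obtain ⟨q, hq⟩ := ho
    have hb : n.bits = true :: q.bits := by rw [hq]; exact Nat.bit1_bits q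
    rcases Nat.eq_zero_or_pos q with hq0 | hq0
    · -- n = 1
      subst hq0
      have hb1 : (n - 1).bits = ([] : List Bool) := by
        rw [show n - 1 = 0 by omega]; exact Nat.zero_bits
      rw [hb, hb1, Nat.zero_bits]
      have h1 := pred_entry (p := PRED) (nb := encBits (true :: [])) (k := k)
        closed_PRED (closed_encBits _) isValue_PRED (isValue_encBits _) hk
      have h2 := encBits_dispatch_true (s := ([] : List Bool))
        (X := predB0i PRED k) (Y := predB1i k) (Z := idTm) trivial trivial trivial
      have h3 := predB1i_entry (k := k) (tv := encBits []) (isValue_encBits _)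
      have h4 : StepN 3 (mkApps (mkApps (encBits []) [predC0i k, predC1i k, predCEi k]) [idTm])
          (mkApps (predCEi k) [idTm]) :=
        stepN_mkApps (encBits_dispatch_nil (X := predC0i k) (Y := predC1i k) (Z := predCEi k) trivial trivial trivial) [idTm]
          (by intro v hv; simp only [List.mem_cons, List.not_mem_nil, or_false] at hv
              subst hv; trivial)
      have h5 := predCEi_entry (k := k)
      refine ⟨3 + (3 + (1 + (3 + 1))), by omega,
        stepN_trans h1 (stepN_trans h2 (stepN_trans h3 (stepN_trans h4 h5)))⟩
    · -- n odd, n ≥ 3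
      obtain ⟨b, t, hqb⟩ : ∃ b t, q.bits = b :: t := by
        rcases Nat.even_or_odd q with h2 | h2
        · obtain ⟨r, hr⟩ := h2
          exact ⟨false, r.bits, by rw [show q = 2 * r by omega]
                                   exact Nat.bit0_bits r (by omega)⟩
        · obtain ⟨r, hr⟩ := h2
          exact ⟨true, r.bits, by rw [hr]; exact Nat.bit1_bits r⟩
      have hb' : (n - 1).bits = false :: b :: t := by
        rw [show n - 1 = 2 * q by omega, Nat.bit0_bits q (by omega), hqb]
      rw [hb, hqb, hb']
      have h1 := pred_entry (p := PRED) (nb := encBits (true :: b :: t)) (k := k)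
        closed_PRED (closed_encBits _) isValue_PRED (isValue_encBits _) hk
      have h2 := encBits_dispatch_true (s := b :: t)
        (X := predB0i PRED k) (Y := predB1i k) (Z := idTm) trivial trivial trivial
      have h3 := predB1i_entry (k := k) (tv := encBits (b :: t)) (isValue_encBits _)
      cases b with
      | false =>
        have h4 : StepN 3
            (mkApps (mkApps (encBits (false :: t)) [predC0i k, predC1i k, predCEi k]) [idTm])
            (mkApps (.app (predC0i k) (encBits t)) [idTm]) :=
          stepN_mkApps (encBits_dispatch_false (X := predC0i k) (Y := predC1i k) (Z := predCEi k) trivial trivial trivial) [idTm]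
            (by intro v hv; simp only [List.mem_cons, List.not_mem_nil, or_false] at hv
                subst hv; trivial)
        have h5 := predC0i_entry (k := k) t
        exact ⟨3 + (3 + (1 + (3 + 2))), by omega,
          stepN_trans h1 (stepN_trans h2 (stepN_trans h3 (stepN_trans h4 h5)))⟩
      | true =>
        have h4 : StepN 3
            (mkApps (mkApps (encBits (true :: t)) [predC0i k, predC1i k, predCEi k]) [idTm])
            (mkApps (.app (predC1i k) (encBits t)) [idTm]) :=
          stepN_mkApps (encBits_dispatch_true (X := predC0i k) (Y := predC1i k) (Z := predCEi k) trivial trivial trivial) [idTm]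
            (by intro v hv; simp only [List.mem_cons, List.not_mem_nil, or_false] at hv
                subst hv; trivial)
        have h5 := predC1i_entry (k := k) t
        exact ⟨3 + (3 + (1 + (3 + 2))), by omega,
          stepN_trans h1 (stepN_trans h2 (stepN_trans h3 (stepN_trans h4 h5)))⟩


theorem msub_mkApps (σ : List Lam) (d : ℕ) : ∀ (vs : List Lam) (t : Lam),
    msub σ d (mkApps t vs) = mkApps (msub σ d t) (vs.map (msub σ d)) := by
  intro vs
  induction vs with
  | nil => intro t; rfl
  | cons v vs ih => intro t; simp only [mkApps, List.map_cons, ih (.app t v), msub]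

----------------------------------------------------------------
-- the lookup terms
----------------------------------------------------------------

def chooseS (K : ℕ) : Lam := iterLam 2 (mkApps (.var 0)
  (((List.finRange K).map fun j => Lam.lam (.app (.var 2) (encChar K j))) ++ [idTm]))
def rstepT : Lam := .lam (mkApps PRED [PRED, .var 2,
  .lam (mkApps (.var 5) [.var 5, .var 4, .var 0, .var 1])])
def rstep (K : ℕ) : Lam := iterLam 4 (mkApps (.var 0) (List.replicate K rstepT ++ [idTm]))
def lkpNE (K : ℕ) : Lam := .lam (mkApps (chooseS K) [.var 3, .var 1])
def lkpNB (K : ℕ) : Lam := .lam (.lam (mkApps (rstep K) [.var 5, .var 4, .var 3, .var 2]))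
def lkp (K : ℕ) : Lam := iterLam 4 (mkApps (.var 1) [lkpNB K, lkpNB K, lkpNE K, idTm])
def lookupT (K : ℕ) : Lam := iterLam 3 (mkApps (lkp K) [lkp K, .var 2, .var 1, .var 0])

def rstepTi (l k nb : Lam) : Lam := .lam (mkApps PRED [PRED, nb,
  .lam (mkApps l [l, shiftA 0 2 k, .var 0, .var 1])])
def kapL (l k rv : Lam) : Lam := .lam (mkApps l [l, shiftA 0 1 k, .var 0, rv])
def lkpNBi (K : ℕ) (l k nb s : Lam) : Lam := .lam (.lam (mkApps (rstep K) [l, shiftA 0 2 k, nb, s]))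
def lkpNEi (K : ℕ) (k s : Lam) : Lam := .lam (mkApps (chooseS K) [shiftA 0 1 k, s])

----------------------------------------------------------------
-- closedness / InDet of the lookup terms
----------------------------------------------------------------

theorem closed_chooseS (K : ℕ) : (chooseS K).Closed := by
  refine closedUnder_iterLam 2 0 (closedUnder_mkApps (by simp [ClosedUnder]) ?_)
  intro v hv
  simp only [List.mem_append, List.mem_map, List.mem_finRange, true_and, List.mem_cons,
    List.not_mem_nil, or_false] at hv
  rcases hv with ⟨j, rfl⟩ | rfl
  · exact ⟨by simp [ClosedUnder], (closed_encChar j).under _⟩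
  · simp [idTm, ClosedUnder]

theorem closed_rstep (K : ℕ) : (rstep K).Closed := by
  refine closedUnder_iterLam 4 0 (closedUnder_mkApps (by simp [ClosedUnder]) ?_)
  intro v hv
  simp only [List.mem_append, List.mem_replicate, List.mem_cons, List.not_mem_nil,
    or_false] at hv
  rcases hv with ⟨-, rfl⟩ | rfl
  · simp [rstepT, ClosedUnder, mkApps, closed_PRED.under]
  · simp [idTm, ClosedUnder]

theorem closed_lkp (K : ℕ) : (lkp K).Closed := by
  refine closedUnder_iterLam 4 0 (closedUnder_mkApps (by simp [ClosedUnder]) ?_)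
  intro v hv
  simp only [List.mem_cons, List.not_mem_nil, or_false] at hv
  have hNB : ClosedUnder (0 + 4) (lkpNB K) := by
    refine closedUnder_mkApps ((closed_rstep K).under 6) ?_
    intro v hv
    simp only [List.mem_cons, List.not_mem_nil, or_false] at hv
    rcases hv with rfl | rfl | rfl | rfl <;> simp [ClosedUnder]
  rcases hv with rfl | rfl | rfl | rfl
  · exact hNB
  · exact hNB
  · refine closedUnder_mkApps ((closed_chooseS K).under 5) ?_
    intro v hv
    simp only [List.mem_cons, List.not_mem_nil, or_false] at hv
    rcases hv with rfl | rfl <;> simp [ClosedUnder]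
  · simp [idTm, ClosedUnder]

theorem closed_lookupT (K : ℕ) : (lookupT K).Closed := by
  refine closedUnder_iterLam 3 0 (closedUnder_mkApps ((closed_lkp K).under _) ?_)
  intro v hv
  simp only [List.mem_cons, List.not_mem_nil, or_false] at hv
  rcases hv with rfl | rfl | rfl | rfl
  · exact (closed_lkp K).under _
  · simp [ClosedUnder]
  · simp [ClosedUnder]
  · simp [ClosedUnder]

theorem isValue_encChar {K : ℕ} (a : Fin K) : (encChar K a).IsValue := by
  unfold encChar
  cases K with
  | zero => trivial
  | succ K => trivial

theorem indet_PRED : PRED.InDet := by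
  simp only [PRED, predBody, predB0, predB1, iterLam, mkApps, idTm, oneC, zzC, zoC, encBits]
  simp [InDet, IsValue]

theorem indet_encChar {K : ℕ} (a : Fin K) : (encChar K a).InDet := indet_iterLam _ trivial

theorem indet_chooseS (K : ℕ) : (chooseS K).InDet := by
  refine indet_iterLam 2 (indet_mkApps trivial ?_)
  intro v hv
  simp only [List.mem_append, List.mem_map, List.mem_finRange, true_and, List.mem_cons,
    List.not_mem_nil, or_false] at hv
  rcases hv with ⟨j, rfl⟩ | rfl
  · exact ⟨⟨trivial, indet_encChar j, isValue_encChar j⟩, trivial⟩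
  · exact ⟨trivial, trivial⟩

theorem indet_rstep (K : ℕ) : (rstep K).InDet := by
  refine indet_iterLam 4 (indet_mkApps trivial ?_)
  intro v hv
  simp only [List.mem_append, List.mem_replicate, List.mem_cons, List.not_mem_nil,
    or_false] at hv
  rcases hv with ⟨-, rfl⟩ | rfl
  · refine ⟨?_, trivial⟩
    refine indet_mkApps indet_PRED ?_
    intro v hv
    simp only [List.mem_cons, List.not_mem_nil, or_false] at hv
    rcases hv with rfl | rfl | rfl
    · exact ⟨indet_PRED, trivial⟩
    · exact ⟨trivial, trivial⟩
    · refine ⟨?_, trivial⟩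
      refine indet_mkApps trivial ?_
      intro v hv
      simp only [List.mem_cons, List.not_mem_nil, or_false] at hv
      rcases hv with rfl | rfl | rfl | rfl <;> exact ⟨trivial, trivial⟩
  · exact ⟨trivial, trivial⟩

theorem indet_lkp (K : ℕ) : (lkp K).InDet := by
  refine indet_iterLam 4 (indet_mkApps trivial ?_)
  intro v hv
  simp only [List.mem_cons, List.not_mem_nil, or_false] at hv
  have hNB : (lkpNB K).InDet := by
    refine indet_mkApps (indet_rstep K) ?_
    intro v hv
    simp only [List.mem_cons, List.not_mem_nil, or_false] at hv
    rcases hv with rfl | rfl | rfl | rfl <;> exact ⟨trivial, trivial⟩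
  rcases hv with rfl | rfl | rfl | rfl
  · exact ⟨hNB, trivial⟩
  · exact ⟨hNB, trivial⟩
  · refine ⟨?_, trivial⟩
    refine indet_mkApps (indet_chooseS K) ?_
    intro v hv
    simp only [List.mem_cons, List.not_mem_nil, or_false] at hv
    rcases hv with rfl | rfl <;> exact ⟨trivial, trivial⟩
  · exact ⟨trivial, trivial⟩

theorem indet_lookupT (K : ℕ) : (lookupT K).InDet := by
  refine indet_iterLam 3 (indet_mkApps (indet_lkp K) ?_)
  intro v hv
  simp only [List.mem_cons, List.not_mem_nil, or_false] at hv
  rcases hv with rfl | rfl | rfl | rfl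
  · exact ⟨indet_lkp K, trivial⟩
  · exact ⟨trivial, trivial⟩
  · exact ⟨trivial, trivial⟩
  · exact ⟨trivial, trivial⟩


----------------------------------------------------------------
-- dispatch lemma for encStr
----------------------------------------------------------------

theorem encStr_dispatch {K : ℕ} (a : Fin K) (r : List (Fin K)) (vs : List Lam) (Z : Lam)
    (hlen : vs.length = K) (hvs : ∀ v ∈ vs, v.IsValue) (hZ : Z.IsValue) :
    StepN (K + 1) (mkApps (encStr K (a :: r)) (vs ++ [Z]))
      (.app (vs[(a : ℕ)]'(by omega)) (encStr K r)) := by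
  have ha : (a : ℕ) < K := a.isLt
  have hl2 : (vs ++ [Z]).length = K + 1 := by simp [hlen]
  have h : StepN ((vs ++ [Z]).length)
      (mkApps (iterLam ((vs ++ [Z]).length) (.app (.var (K - (a : ℕ))) (encStr K r))) (vs ++ [Z]))
      (msub ((vs ++ [Z]).reverse) 0 (.app (.var (K - (a : ℕ))) (encStr K r))) := by
    refine stepN_apps (vs ++ [Z]) _ ?_
    intro v hv
    rcases List.mem_append.1 hv with hv | hv
    · exact hvs v hv
    · simp only [List.mem_singleton] at hv; subst hv; exact hZ
  rw [hl2] at h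
  have e : msub ((vs ++ [Z]).reverse) 0 (.app (.var (K - (a : ℕ))) (encStr K r))
      = .app (vs[(a : ℕ)]'(by omega)) (encStr K r) := by
    rw [List.reverse_append, List.reverse_singleton, List.singleton_append]
    show Lam.app (msub (Z :: vs.reverse) 0 (.var (K - (a : ℕ))))
        (msub (Z :: vs.reverse) 0 (encStr K r)) = _
    rw [msub_closed (closed_encStr K r)]
    congr 1
    rw [msub, if_neg (by omega), Nat.sub_zero,
      show K - (a : ℕ) = (K - (a : ℕ) - 1) + 1 by omega, List.getD_cons_succ,
      List.getD_eq_getElem _ _ (by simp [hlen]; omega), List.getElem_reverse,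
      shiftA_zero]
    congr 1
    omega
  rw [e] at h
  exact h

----------------------------------------------------------------
-- step lemmas for the lookup terms
----------------------------------------------------------------

theorem lookupT_entry (K : ℕ) {kont nbv sv : Lam}
    (hk : kont.IsValue) (hnb : nbv.IsValue) (hnbc : nbv.Closed)
    (hs : sv.IsValue) (hsc : sv.Closed) :
    StepN 3 (mkApps (lookupT K) [kont, nbv, sv]) (mkApps (lkp K) [lkp K, kont, nbv, sv]) := by
  have h : StepN 3 (mkApps (lookupT K) [kont, nbv, sv])
      (msub [sv, nbv, kont] 0 (mkApps (lkp K) [lkp K, .var 2, .var 1, .var 0])) := by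
    have := stepN_apps [kont, nbv, sv] (mkApps (lkp K) [lkp K, .var 2, .var 1, .var 0]) ?_
    · exact this
    · intro v hv; simp only [List.mem_cons, List.not_mem_nil, or_false] at hv
      rcases hv with rfl | rfl | rfl
      exacts [hk, hnb, hs]
  rwa [show msub [sv, nbv, kont] 0 (mkApps (lkp K) [lkp K, .var 2, .var 1, .var 0])
      = mkApps (lkp K) [lkp K, kont, nbv, sv] from by
    have hL := closed_lkp K
    generalize hg : lkp K = L
    rw [hg] at hL
    simp [msub, mkApps, shiftA_zero, msub_closed hL]] at h

theorem lkp_entry (K : ℕ) {l kont nbv sv : Lam}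
    (hl : l.IsValue) (hlc : l.Closed) (hk : kont.IsValue)
    (hnb : nbv.IsValue) (hnbc : nbv.Closed) (hs : sv.IsValue) (hsc : sv.Closed) :
    StepN 4 (mkApps (lkp K) [l, kont, nbv, sv])
      (mkApps nbv [lkpNBi K l kont nbv sv, lkpNBi K l kont nbv sv,
        lkpNEi K kont sv, idTm]) := by
  have h : StepN 4 (mkApps (lkp K) [l, kont, nbv, sv])
      (msub [sv, nbv, kont, l] 0 (mkApps (.var 1) [lkpNB K, lkpNB K, lkpNE K, idTm])) := by
    have := stepN_apps [l, kont, nbv, sv] (mkApps (.var 1) [lkpNB K, lkpNB K, lkpNE K, idTm]) ?_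
    · exact this
    · intro v hv; simp only [List.mem_cons, List.not_mem_nil, or_false] at hv
      rcases hv with rfl | rfl | rfl | rfl
      exacts [hl, hk, hnb, hs]
  rwa [show msub [sv, nbv, kont, l] 0 (mkApps (.var 1) [lkpNB K, lkpNB K, lkpNE K, idTm])
      = mkApps nbv [lkpNBi K l kont nbv sv, lkpNBi K l kont nbv sv, lkpNEi K kont sv, idTm]
      from by
    have hR := closed_rstep K
    have hC := closed_chooseS K
    simp only [lkpNB, lkpNE, lkpNBi, lkpNEi]
    generalize hgR : rstep K = R
    generalize hgC : chooseS K = C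
    rw [hgR] at hR
    rw [hgC] at hC
    simp [msub, mkApps, idTm, shiftA_zero, msub_closed hR, msub_closed hC,
      shiftA_closed hlc, shiftA_closed hnbc, shiftA_closed hsc]] at h


theorem lkpNBi_entry (K : ℕ) {l kont nbv sv tv : Lam}
    (hlc : l.Closed) (hnbc : nbv.Closed) (hsc : sv.Closed) (htv : tv.IsValue) :
    StepN 2 (mkApps (lkpNBi K l kont nbv sv) [tv, idTm])
      (mkApps (rstep K) [l, kont, nbv, sv]) := by
  have h : StepN 2 (mkApps (lkpNBi K l kont nbv sv) [tv, idTm])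
      (msub [idTm, tv] 0 (mkApps (rstep K) [l, shiftA 0 2 kont, nbv, sv])) := by
    have := stepN_apps [tv, idTm] (mkApps (rstep K) [l, shiftA 0 2 kont, nbv, sv]) ?_
    · exact this
    · intro v hv; simp only [List.mem_cons, List.not_mem_nil, or_false] at hv
      rcases hv with rfl | rfl
      exacts [htv, trivial]
  have e2 : msub [idTm, tv] 0 (shiftA 0 2 kont) = shiftA 0 0 kont := msub_shiftA kont (by simp)
  rwa [show msub [idTm, tv] 0 (mkApps (rstep K) [l, shiftA 0 2 kont, nbv, sv])
      = mkApps (rstep K) [l, kont, nbv, sv] from by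
    have hR := closed_rstep K
    generalize hgR : rstep K = R
    rw [hgR] at hR
    simp [msub, mkApps, e2, shiftA_zero, msub_closed hR, msub_closed hlc,
      msub_closed hnbc, msub_closed hsc]] at h

theorem rstep_entry (K : ℕ) {l kont nbv sv : Lam}
    (hl : l.IsValue) (hlc : l.Closed) (hk : kont.IsValue)
    (hnb : nbv.IsValue) (hnbc : nbv.Closed) (hs : sv.IsValue) :
    StepN 4 (mkApps (rstep K) [l, kont, nbv, sv])
      (mkApps sv (List.replicate K (rstepTi l kont nbv) ++ [idTm])) := by
  have h : StepN 4 (mkApps (rstep K) [l, kont, nbv, sv])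
      (msub [sv, nbv, kont, l] 0 (mkApps (.var 0) (List.replicate K rstepT ++ [idTm]))) := by
    have := stepN_apps [l, kont, nbv, sv] (mkApps (.var 0) (List.replicate K rstepT ++ [idTm])) ?_
    · exact this
    · intro v hv; simp only [List.mem_cons, List.not_mem_nil, or_false] at hv
      rcases hv with rfl | rfl | rfl | rfl
      exacts [hl, hk, hnb, hs]
  have er : msub [sv, nbv, kont, l] 0 rstepT = rstepTi l kont nbv := by
    have hP := closed_PRED
    simp only [rstepT, rstepTi]
    generalize hgP : PRED = P
    rw [hgP] at hP
    simp [msub, mkApps, shiftA_zero, msub_closed hP, shiftA_closed hnbc, shiftA_closed hlc]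
  rwa [show msub [sv, nbv, kont, l] 0 (mkApps (.var 0) (List.replicate K rstepT ++ [idTm]))
      = mkApps sv (List.replicate K (rstepTi l kont nbv) ++ [idTm]) from by
    rw [msub_mkApps, List.map_append, List.map_replicate, er]
    simp [msub, shiftA_zero, idTm]] at h

theorem rstepTi_entry {l kont nbv rv : Lam}
    (hlc : l.Closed) (hnbc : nbv.Closed) (hrvc : rv.Closed) (hrv : rv.IsValue) :
    StepN 1 (.app (rstepTi l kont nbv) rv)
      (mkApps PRED [PRED, nbv, kapL l kont rv]) := by
  have h : StepN 1 (.app (rstepTi l kont nbv) rv)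
      (msub [rv] 0 (mkApps PRED [PRED, nbv,
        .lam (mkApps l [l, shiftA 0 2 kont, .var 0, .var 1])])) := by
    have := stepN_apps [rv] (mkApps PRED [PRED, nbv,
        .lam (mkApps l [l, shiftA 0 2 kont, .var 0, .var 1])]) ?_
    · exact this
    · intro v hv; simp only [List.mem_cons, List.not_mem_nil, or_false] at hv
      subst hv; exact hrv
  have e2 : msub [rv] 1 (shiftA 0 2 kont) = shiftA 0 1 kont := msub_shiftA kont (by simp)
  rwa [show msub [rv] 0 (mkApps PRED [PRED, nbv,
        .lam (mkApps l [l, shiftA 0 2 kont, .var 0, .var 1])])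
      = mkApps PRED [PRED, nbv, kapL l kont rv] from by
    have hP := closed_PRED
    simp only [kapL]
    generalize hgP : PRED = P
    rw [hgP] at hP
    simp [msub, mkApps, e2, shiftA_zero, msub_closed hP, msub_closed hnbc, msub_closed hlc,
      shiftA_closed hrvc]] at h

theorem kapL_entry {l kont rv pv : Lam}
    (hlc : l.Closed) (hrvc : rv.Closed) (hpv : pv.IsValue) :
    StepN 1 (.app (kapL l kont rv) pv) (mkApps l [l, kont, pv, rv]) := by
  have h : StepN 1 (.app (kapL l kont rv) pv)
      (msub [pv] 0 (mkApps l [l, shiftA 0 1 kont, .var 0, rv])) := by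
    have := stepN_apps [pv] (mkApps l [l, shiftA 0 1 kont, .var 0, rv]) ?_
    · exact this
    · intro v hv; simp only [List.mem_cons, List.not_mem_nil, or_false] at hv
      subst hv; exact hpv
  have e2 : msub [pv] 0 (shiftA 0 1 kont) = shiftA 0 0 kont := msub_shiftA kont (by simp)
  rwa [show msub [pv] 0 (mkApps l [l, shiftA 0 1 kont, .var 0, rv])
      = mkApps l [l, kont, pv, rv] from by
    simp [msub, mkApps, e2, shiftA_zero, msub_closed hlc, msub_closed hrvc]] at h

theorem lkpNEi_entry (K : ℕ) {kont sv : Lam} (hsc : sv.Closed) :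
    StepN 1 (.app (lkpNEi K kont sv) idTm) (mkApps (chooseS K) [kont, sv]) := by
  have h : StepN 1 (.app (lkpNEi K kont sv) idTm)
      (msub [idTm] 0 (mkApps (chooseS K) [shiftA 0 1 kont, sv])) := by
    have := stepN_apps [idTm] (mkApps (chooseS K) [shiftA 0 1 kont, sv]) ?_
    · exact this
    · intro v hv; simp only [List.mem_cons, List.not_mem_nil, or_false] at hv
      subst hv; trivial
  have e2 : msub [idTm] 0 (shiftA 0 1 kont) = shiftA 0 0 kont := msub_shiftA kont (by simp)
  rwa [show msub [idTm] 0 (mkApps (chooseS K) [shiftA 0 1 kont, sv])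
      = mkApps (chooseS K) [kont, sv] from by
    have hC := closed_chooseS K
    generalize hgC : chooseS K = C
    rw [hgC] at hC
    simp [msub, mkApps, e2, shiftA_zero, msub_closed hC, msub_closed hsc]] at h

theorem chooseS_entry (K : ℕ) {kont sv : Lam} (hk : kont.IsValue) (hs : sv.IsValue) :
    StepN 2 (mkApps (chooseS K) [kont, sv])
      (mkApps sv (((List.finRange K).map fun j =>
        Lam.lam (.app (shiftA 0 1 kont) (encChar K j))) ++ [idTm])) := by
  have h : StepN 2 (mkApps (chooseS K) [kont, sv])
      (msub [sv, kont] 0 (mkApps (.var 0)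
        (((List.finRange K).map fun j => Lam.lam (.app (.var 2) (encChar K j))) ++ [idTm]))) := by
    have := stepN_apps [kont, sv] (mkApps (.var 0)
        (((List.finRange K).map fun j => Lam.lam (.app (.var 2) (encChar K j))) ++ [idTm])) ?_
    · exact this
    · intro v hv; simp only [List.mem_cons, List.not_mem_nil, or_false] at hv
      rcases hv with rfl | rfl
      exacts [hk, hs]
  rwa [show msub [sv, kont] 0 (mkApps (.var 0)
        (((List.finRange K).map fun j => Lam.lam (.app (.var 2) (encChar K j))) ++ [idTm]))
      = mkApps sv (((List.finRange K).map fun j =>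
          Lam.lam (.app (shiftA 0 1 kont) (encChar K j))) ++ [idTm]) from by
    rw [msub_mkApps, List.map_append, List.map_map]
    have em : (msub [sv, kont] 0) ∘ (fun j => Lam.lam (.app (.var 2) (encChar K j)))
        = fun j : Fin K => Lam.lam (.app (shiftA 0 1 kont) (encChar K j)) := by
      funext j
      simp [msub, msub_closed (closed_encChar j)]
    rw [em]
    simp [msub, shiftA_zero, idTm]] at h

theorem sBranch_entry {K : ℕ} {kont rv : Lam} (a : Fin K) (hrv : rv.IsValue) :
    StepN 1 (.app (.lam (.app (shiftA 0 1 kont) (encChar K a))) rv)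
      (.app kont (encChar K a)) := by
  have h : StepN 1 (.app (.lam (.app (shiftA 0 1 kont) (encChar K a))) rv)
      (msub [rv] 0 (.app (shiftA 0 1 kont) (encChar K a))) := by
    have := stepN_apps [rv] (.app (shiftA 0 1 kont) (encChar K a)) ?_
    · exact this
    · intro v hv; simp only [List.mem_cons, List.not_mem_nil, or_false] at hv
      subst hv; exact hrv
  have e2 : msub [rv] 0 (shiftA 0 1 kont) = shiftA 0 0 kont := msub_shiftA kont (by simp)
  rwa [show msub [rv] 0 (.app (shiftA 0 1 kont) (encChar K a)) = .app kont (encChar K a) from by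
    simp [msub, e2, shiftA_zero, msub_closed (closed_encChar a)]] at h


theorem lkp_steps (K : ℕ) {kont : Lam} (hk : kont.IsValue) :
    ∀ (n : ℕ) (i : List (Fin K)) (h : n < i.length),
      ∃ m, m ≤ (K + 28) * (n + 1) * (Nat.log 2 (n + 1) + 1) ∧
        StepN m (mkApps (lkp K) [lkp K, kont, encBits n.bits, encStr K i])
          (.app kont (encChar K (i.get ⟨n, h⟩))) := by
  intro n
  induction n with
  | zero =>
    intro i h
    match i with
    | a :: r =>
    rw [Nat.zero_bits]
    have h1 := lkp_entry K (l := lkp K) (kont := kont) (nbv := encBits [])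
      (sv := encStr K (a :: r)) trivial (closed_lkp K) hk (isValue_encBits _)
      (closed_encBits _) (isValue_encStr _ _) (closed_encStr _ _)
    set NB := lkpNBi K (lkp K) kont (encBits []) (encStr K (a :: r)) with hNB
    set NE := lkpNEi K kont (encStr K (a :: r)) with hNE
    have h2 : StepN 3 (mkApps (mkApps (encBits []) [NB, NB, NE]) [idTm])
        (mkApps NE [idTm]) :=
      stepN_mkApps (encBits_dispatch_nil (X := NB) (Y := NB) (Z := NE)
        trivial trivial trivial) [idTm]
        (by intro v hv; simp only [List.mem_cons, List.not_mem_nil, or_false] at hv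
            subst hv; trivial)
    have h3 := lkpNEi_entry K (kont := kont) (sv := encStr K (a :: r)) (closed_encStr _ _)
    have h4 := chooseS_entry K (kont := kont) (sv := encStr K (a :: r)) hk (isValue_encStr _ _)
    have h5 := encStr_dispatch a r
      ((List.finRange K).map fun j => Lam.lam (.app (shiftA 0 1 kont) (encChar K j))) idTm
      (by simp) (by intro v hv; simp only [List.mem_map] at hv; obtain ⟨j, -, rfl⟩ := hv; trivial)
      trivial
    rw [show ((List.finRange K).map fun j =>
        Lam.lam (.app (shiftA 0 1 kont) (encChar K j)))[(a : ℕ)]'(by simpa using a.isLt)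
        = Lam.lam (.app (shiftA 0 1 kont) (encChar K a)) from by simp] at h5
    have h6 := sBranch_entry (kont := kont) (rv := encStr K r) a (isValue_encStr _ _)
    refine ⟨4 + (3 + (1 + (2 + ((K + 1) + 1)))), ?_,
      stepN_trans h1 (stepN_trans h2 (stepN_trans h3 (stepN_trans h4
        (stepN_trans h5 h6))))⟩
    have : Nat.log 2 1 = 0 := Nat.log_one_right 2
    nlinarith
  | succ n ih =>
    intro i h
    match i with
    | a :: r =>
    have hr : n < r.length := by simpa using h
    obtain ⟨b, t, hbt⟩ : ∃ b t, (n + 1).bits = b :: t := by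
      rcases Nat.even_or_odd (n + 1) with h2 | h2
      · obtain ⟨q, hq⟩ := h2
        exact ⟨false, q.bits, by rw [show n + 1 = 2 * q by omega]
                                 exact Nat.bit0_bits q (by omega)⟩
      · obtain ⟨q, hq⟩ := h2
        exact ⟨true, q.bits, by rw [hq]; exact Nat.bit1_bits q⟩
    obtain ⟨m1, hm1, hs1⟩ := ih r hr
    obtain ⟨mp, hmp, hsp⟩ := pred_steps (n + 1) (by omega)
      (kapL (lkp K) kont (encStr K r)) trivial
    simp only [Nat.add_sub_cancel] at hsp
    have h1 := lkp_entry K (l := lkp K) (kont := kont) (nbv := encBits (n + 1).bits)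
      (sv := encStr K (a :: r)) trivial (closed_lkp K) hk (isValue_encBits _)
      (closed_encBits _) (isValue_encStr _ _) (closed_encStr _ _)
    set NB := lkpNBi K (lkp K) kont (encBits (n + 1).bits) (encStr K (a :: r)) with hNB
    set NE := lkpNEi K kont (encStr K (a :: r)) with hNE
    have h2 : StepN 3 (mkApps (mkApps (encBits (n + 1).bits) [NB, NB, NE]) [idTm])
        (mkApps (.app NB (encBits t)) [idTm]) := by
      rw [hbt]
      refine stepN_mkApps ?_ [idTm]
        (by intro v hv; simp only [List.mem_cons, List.not_mem_nil, or_false] at hv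
            subst hv; trivial)
      cases b
      · exact encBits_dispatch_false (X := NB) (Y := NB) (Z := NE) trivial trivial trivial
      · exact encBits_dispatch_true (X := NB) (Y := NB) (Z := NE) trivial trivial trivial
    have h3 := lkpNBi_entry K (l := lkp K) (kont := kont) (nbv := encBits (n + 1).bits)
      (sv := encStr K (a :: r)) (tv := encBits t) (closed_lkp K) (closed_encBits _)
      (closed_encStr _ _) (isValue_encBits _)
    have h4 := rstep_entry K (l := lkp K) (kont := kont) (nbv := encBits (n + 1).bits)
      (sv := encStr K (a :: r)) trivial (closed_lkp K) hk (isValue_encBits _)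
      (closed_encBits _) (isValue_encStr _ _)
    have h5 := encStr_dispatch a r
      (List.replicate K (rstepTi (lkp K) kont (encBits (n + 1).bits))) idTm
      (by simp) (by intro v hv; simp only [List.mem_replicate] at hv; rw [hv.2]; trivial)
      trivial
    rw [show (List.replicate K (rstepTi (lkp K) kont
          (encBits (n + 1).bits)))[(a : ℕ)]'(by simpa using a.isLt)
        = rstepTi (lkp K) kont (encBits (n + 1).bits) from by simp] at h5
    have h6 := rstepTi_entry (l := lkp K) (kont := kont) (nbv := encBits (n + 1).bits)
      (rv := encStr K r) (closed_lkp K) (closed_encBits _) (closed_encStr _ _)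
      (isValue_encStr _ _)
    have h8 := kapL_entry (l := lkp K) (kont := kont) (rv := encStr K r)
      (pv := encBits n.bits) (closed_lkp K) (closed_encStr _ _) (isValue_encBits _)
    have hchar : (a :: r).get ⟨n + 1, h⟩ = r.get ⟨n, hr⟩ := rfl
    rw [hchar]
    refine ⟨4 + (3 + (2 + (4 + ((K + 1) + (1 + (mp + (1 + m1))))))), ?_,
      stepN_trans h1 (stepN_trans h2 (stepN_trans h3 (stepN_trans h4
        (stepN_trans h5 (stepN_trans h6 (stepN_trans hsp
          (stepN_trans h8 hs1)))))))⟩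
    show _ ≤ (K + 28) * (n + 2) * (Nat.log 2 (n + 2) + 1)
    have hA1 : 1 ≤ Nat.log 2 (n + 1) + 1 := by omega
    have hmono : Nat.log 2 (n + 1) ≤ Nat.log 2 (n + 2) := Nat.log_mono_right (by omega)
    set A := Nat.log 2 (n + 1) + 1 with hA
    set B := Nat.log 2 (n + 2) + 1 with hB
    have hAB : A ≤ B := by omega
    have c1 : 4 + (3 + (2 + (4 + ((K + 1) + (1 + (mp + (1 + m1)))))))
        ≤ (K + 16) + 12 * A + (K + 28) * (n + 1) * A := by omega
    have c2 : (K + 16) + 12 * A ≤ (K + 28) * A := by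
      have : (K + 16) * 1 ≤ (K + 16) * A := Nat.mul_le_mul_left _ hA1
      nlinarith
    have c3 : (K + 28) * A + (K + 28) * (n + 1) * A = (K + 28) * (n + 2) * A := by ring
    have c4 : (K + 28) * (n + 2) * A ≤ (K + 28) * (n + 2) * B :=
      Nat.mul_le_mul_left _ hAB
    omega

/-- for every finite alphabet (of size `K`) there is a closed λ-term
    `lookup_λ` of `Λ_det` and a constant `c` such that for every value `k`, every
    `n`, and every (nonempty) string `i` with `n < |i|`,
    `lookup_λ k ⟨n̂⟩ ⟨i⟩ →det^m k ⟨a⟩` where `a` is the `(n+1)`-th character of `i`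
    and `m ≤ c·(n+1)·(log₂(n+1)+1)`. -/
theorem lookup_term_correct (K : ℕ) :
    ∃ (lookupTm : Lam) (c : ℕ), lookupTm.Closed ∧ lookupTm.InDet ∧
      ∀ kont : Lam, kont.IsValue → kont.InDet →
        ∀ (n : ℕ) (i : List (Fin K)) (h : n < i.length),
          ∃ m : ℕ, m ≤ c * (n + 1) * (Nat.log 2 (n + 1) + 1) ∧
            Lam.StepN m
              (.app (.app (.app lookupTm kont) (encBits (Nat.bits n))) (encStr K i))
              (.app kont (encChar K (i.get ⟨n, h⟩))) := by
  refine ⟨lookupT K, K + 31, closed_lookupT K, indet_lookupT K, ?_⟩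
  intro kont hkv _ n i h
  obtain ⟨m1, hm1, hs1⟩ := lkp_steps K hkv n i h
  have h0 := lookupT_entry K (kont := kont) (nbv := encBits n.bits) (sv := encStr K i)
    hkv (isValue_encBits _) (closed_encBits _) (isValue_encStr _ _) (closed_encStr _ _)
  refine ⟨3 + m1, ?_, stepN_trans h0 hs1⟩
  have hp : 1 ≤ (n + 1) * (Nat.log 2 (n + 1) + 1) :=
    Nat.one_le_iff_ne_zero.2 (by positivity)
  nlinarith

end LogTM
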